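/- Let V be an N-dimensional complex inner product space, A a self-adjoint endomorphism of V with eigenvalues α₁ ≥ α₂ ≥ … ≥ α_N listed in nonincreasing order with multiplicity, and χ_A the limit non-Archimedean norm of A, i.e. χ_A(v) = −lim_{t→∞} (1/t) · log ⟨exp(−tA) v, v⟩ for nonzero v and χ_A(0) = +∞. Then for every 1 ≤ i ≤ N, the i-th jumping number λ_i(χ_A) := max{λ ∈ ℝ : dim_ℂ {v ∈ V : χ_A(v) ≥ λ} ≥ i} equals α_i. -/

import Mathlib

open Filter Finset


lemma aux_exp_eigen {V : Type*} [NormedAddCommGroup V] [NormedSpace ℂ V] [CompleteSpace V]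
    (B : V →L[ℂ] V) (c : ℂ) (x : V) (h : B x = c • x) :
    NormedSpace.exp B x = Complex.exp c • x := by
  have hpow : ∀ n : ℕ, (B ^ n) x = c ^ n • x := by
    intro n
    induction n with
    | zero => simp
    | succ n ih =>
      rw [pow_succ, ContinuousLinearMap.mul_apply, h, map_smul, ih, smul_smul, pow_succ,
        mul_comm]
  have h1 : NormedSpace.exp B x = ∑' n : ℕ, (((n.factorial : ℂ))⁻¹ • B ^ n) x := by
    rw [NormedSpace.exp_eq_tsum (𝕂 := ℂ)]
    simpa using ((ContinuousLinearMap.apply ℂ V x).map_tsum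
      (NormedSpace.expSeries_summable' (𝕂 := ℂ) B))
  have h2 : ∀ n : ℕ, (((n.factorial : ℂ))⁻¹ • B ^ n) x = ((n.factorial : ℂ)⁻¹ • c ^ n) • x := by
    intro n
    rw [ContinuousLinearMap.smul_apply, hpow, smul_smul, smul_eq_mul]
  rw [h1, tsum_congr h2, Summable.tsum_smul_const (NormedSpace.expSeries_summable' (𝕂 := ℂ) c)]
  congr 1
  rw [Complex.exp_eq_exp_ℂ, NormedSpace.exp_eq_tsum (𝕂 := ℂ)]

lemma aux_inner {V : Type*} [NormedAddCommGroup V] [InnerProductSpace ℂ V]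
    [FiniteDimensional ℂ V] {N : ℕ} (A : V →L[ℂ] V) (α : Fin N → ℝ)
    (b : OrthonormalBasis (Fin N) ℂ V)
    (hb : ∀ i : Fin N, A (b i) = ((α i : ℝ) : ℂ) • b i) (v : V) (t : ℝ) :
    ((inner ℂ ((NormedSpace.exp ((-(t : ℂ)) • A)) v) v : ℂ)).re =
      ∑ j : Fin N, ‖b.repr v j‖ ^ 2 * Real.exp (-(t * α j)) := by
  have hexp : (NormedSpace.exp ((-(t : ℂ)) • A)) v =
      ∑ j : Fin N, (b.repr v j * Real.exp (-(t * α j))) • b j := by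
    conv_lhs => rw [← b.sum_repr v]
    rw [map_sum]
    refine Finset.sum_congr rfl fun j _ => ?_
    rw [map_smul]
    have heig : ((-(t : ℂ)) • A) (b j) = ((-(t : ℂ)) * (α j : ℂ)) • b j := by
      rw [ContinuousLinearMap.smul_apply, hb j, smul_smul]
    rw [aux_exp_eigen _ _ _ heig, smul_smul]
    congr 2
    rw [show ((-(t : ℂ)) * (α j : ℂ)) = ((-(t * α j) : ℝ) : ℂ) by push_cast; ring_nf,
      ← Complex.ofReal_exp]
  rw [hexp, sum_inner]
  rw [Complex.re_sum]
  refine Finset.sum_congr rfl fun j _ => ?_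
  rw [inner_smul_left, map_mul, Complex.conj_ofReal, ← b.repr_apply_apply]
  have : (starRingEnd ℂ) (b.repr v j) * ((Real.exp (-(t * α j)) : ℝ) : ℂ) * b.repr v j
      = ((‖b.repr v j‖ ^ 2 * Real.exp (-(t * α j)) : ℝ) : ℂ) := by
    rw [show (‖b.repr v j‖ : ℝ) ^ 2 = Complex.normSq (b.repr v j) from by
      rw [Complex.sq_norm]]
    rw [mul_comm ((starRingEnd ℂ) (b.repr v j)) _, mul_assoc,
      mul_comm ((starRingEnd ℂ) (b.repr v j)) (b.repr v j), Complex.mul_conj,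
      Complex.ofReal_mul]
    ring
  rw [this, Complex.ofReal_re]

lemma aux_tendsto {ι : Type*} (s : Finset ι) (hs : s.Nonempty) (w : ι → ℝ)
    (hw : ∀ j ∈ s, 0 < w j) (α : ι → ℝ) :
    Tendsto (fun t : ℝ => -((1 / t) * Real.log (∑ j ∈ s, w j * Real.exp (-(t * α j)))))
      atTop (nhds (s.inf' hs α)) := by
  set m := s.inf' hs α with hm
  obtain ⟨j0, hj0, hj0m⟩ := s.exists_mem_eq_inf' hs α
  have hW : 0 < ∑ j ∈ s, w j := Finset.sum_pos hw hs
  have hfpos : ∀ t : ℝ, 0 < ∑ j ∈ s, w j * Real.exp (-(t * α j)) := fun t =>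
    Finset.sum_pos (fun j hj => mul_pos (hw j hj) (Real.exp_pos _)) hs
  have hlim : ∀ c : ℝ, Tendsto (fun t : ℝ => m - c / t) atTop (nhds m) := by
    intro c
    have h0 : Tendsto (fun t : ℝ => c / t) atTop (nhds 0) :=
      tendsto_const_nhds.div_atTop tendsto_id
    simpa using tendsto_const_nhds.sub h0
  refine tendsto_of_tendsto_of_tendsto_of_le_of_le' (hlim (Real.log (∑ j ∈ s, w j)))
    (hlim (Real.log (w j0))) ?_ ?_
  · filter_upwards [eventually_gt_atTop (0 : ℝ)] with t ht
    -- lower bound: f t ≤ (∑ w) * exp (-(t*m))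
    have hub : (∑ j ∈ s, w j * Real.exp (-(t * α j))) ≤ (∑ j ∈ s, w j) * Real.exp (-(t * m)) := by
      rw [Finset.sum_mul]
      refine Finset.sum_le_sum fun j hj => ?_
      refine mul_le_mul_of_nonneg_left ?_ (hw j hj).le
      exact Real.exp_le_exp.2 (by nlinarith [Finset.inf'_le α hj, ht.le])
    have hlog : Real.log (∑ j ∈ s, w j * Real.exp (-(t * α j)))
        ≤ Real.log (∑ j ∈ s, w j) + (-(t * m)) := by
      calc Real.log (∑ j ∈ s, w j * Real.exp (-(t * α j)))
          ≤ Real.log ((∑ j ∈ s, w j) * Real.exp (-(t * m))) :=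
            Real.log_le_log (hfpos t) hub
        _ = Real.log (∑ j ∈ s, w j) + (-(t * m)) := by
            rw [Real.log_mul hW.ne' (Real.exp_pos _).ne', Real.log_exp]
    have := mul_le_mul_of_nonneg_left hlog (by positivity : (0:ℝ) ≤ 1 / t)
    have heq : (1 / t) * (Real.log (∑ j ∈ s, w j) + (-(t * m)))
        = Real.log (∑ j ∈ s, w j) / t - m := by
      field_simp
      ring
    linarith [this, heq ▸ this]
  · filter_upwards [eventually_gt_atTop (0 : ℝ)] with t ht
    have hlb : w j0 * Real.exp (-(t * m)) ≤ ∑ j ∈ s, w j * Real.exp (-(t * α j)) := by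
      rw [hm, hj0m]
      exact Finset.single_le_sum (f := fun j => w j * Real.exp (-(t * α j)))
        (fun j hj => (mul_pos (hw j hj) (Real.exp_pos _)).le) hj0
    have hlog : Real.log (w j0) + (-(t * m))
        ≤ Real.log (∑ j ∈ s, w j * Real.exp (-(t * α j))) := by
      calc Real.log (w j0) + (-(t * m))
          = Real.log (w j0 * Real.exp (-(t * m))) := by
            rw [Real.log_mul (hw j0 hj0).ne' (Real.exp_pos _).ne', Real.log_exp]
        _ ≤ _ := Real.log_le_log (mul_pos (hw j0 hj0) (Real.exp_pos _)) hlb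
    have := mul_le_mul_of_nonneg_left hlog (by positivity : (0:ℝ) ≤ 1 / t)
    have heq : (1 / t) * (Real.log (w j0) + (-(t * m))) = Real.log (w j0) / t - m := by
      field_simp
      ring
    linarith [this, heq ▸ this]


/-- Let `V` be an `N`-dimensional complex inner product space, `A` a
self-adjoint endomorphism of `V` with eigenvalues `α₁ ≥ … ≥ α_N` listed nonincreasingly
with multiplicity (encoded by an orthonormal eigenbasis `b`), and `χ_A` the limit
non-Archimedean norm of `A`, i.e. `χ_A(v) = -lim_{t→∞} (1/t) log ⟨exp(-tA) v, v⟩` for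
`v ≠ 0`, `χ_A(0) = +∞`.  Then for each `1 ≤ i ≤ N` the `i`-th jumping number
`λ_i(χ_A) = max {λ : dim_ℂ {v : χ_A(v) ≥ λ} ≥ i}` equals `α_i`. -/
theorem statement14 {V : Type*} [NormedAddCommGroup V] [InnerProductSpace ℂ V]
    [FiniteDimensional ℂ V] (N : ℕ)
    (A : V →L[ℂ] V) (hA : ∀ x y : V, (inner ℂ (A x) y : ℂ) = inner ℂ x (A y))
    (α : Fin N → ℝ) (hα : Antitone α)
    (b : OrthonormalBasis (Fin N) ℂ V)
    (hb : ∀ i : Fin N, A (b i) = ((α i : ℝ) : ℂ) • b i)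
    (χ : V → EReal) (hχ0 : χ 0 = ⊤)
    (hχ : ∀ v : V, v ≠ 0 →
      Filter.Tendsto
        (fun t : ℝ =>
          ((-((1 / t) *
            Real.log ((inner ℂ ((NormedSpace.exp ((-(t : ℂ)) • A)) v) v : ℂ).re)) : ℝ) :
            EReal))
        Filter.atTop (nhds (χ v))) :
    ∀ i : Fin N,
      IsGreatest {lam : ℝ | ∃ W : Submodule ℂ V,
        (W : Set V) = {v : V | (lam : EReal) ≤ χ v} ∧
          (i : ℕ) + 1 ≤ Module.finrank ℂ W} (α i) := by
  classical
  -- support of a nonzero vector is nonempty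
  have hsupp : ∀ v : V, v ≠ 0 → ((b.toBasis.repr v).support).Nonempty := by
    intro v hv
    rw [Finsupp.support_nonempty_iff]
    exact fun h => hv ((LinearEquiv.map_eq_zero_iff b.toBasis.repr).1 h)
  -- value of χ on nonzero vectors
  have hχval : ∀ (v : V) (hv : v ≠ 0),
      χ v = ((((b.toBasis.repr v).support).inf' (hsupp v hv) α : ℝ) : EReal) := by
    intro v hv
    refine tendsto_nhds_unique (hχ v hv) ?_
    rw [EReal.tendsto_coe]
    have hfun : ∀ t : ℝ,
        ((inner ℂ ((NormedSpace.exp ((-(t : ℂ)) • A)) v) v : ℂ)).re =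
          ∑ j ∈ (b.toBasis.repr v).support, ‖b.repr v j‖ ^ 2 * Real.exp (-(t * α j)) := by
      intro t
      rw [aux_inner A α b hb v t]
      refine (Finset.sum_subset (Finset.subset_univ _) fun j _ hj => ?_).symm
      rw [Finsupp.notMem_support_iff] at hj
      rw [← b.coe_toBasis_repr_apply, hj]
      simp
    have hwpos : ∀ j ∈ (b.toBasis.repr v).support, 0 < ‖b.repr v j‖ ^ 2 := by
      intro j hj
      have : b.repr v j ≠ 0 := by
        rw [← b.coe_toBasis_repr_apply]
        exact Finsupp.mem_support_iff.1 hj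
      exact pow_pos (norm_pos_iff.2 this) 2
    exact (aux_tendsto _ (hsupp v hv) (fun j => ‖b.repr v j‖ ^ 2) hwpos α).congr
      fun t => by rw [hfun t]
  -- characterization of the superlevel sets
  have hchar : ∀ (lam : ℝ) (v : V),
      ((lam : EReal) ≤ χ v ↔ ↑(b.toBasis.repr v).support ⊆ {j : Fin N | lam ≤ α j}) := by
    intro lam v
    by_cases hv : v = 0
    · subst hv
      simp [hχ0, le_top]
    · rw [hχval v hv, EReal.coe_le_coe_iff, Finset.le_inf'_iff]
      constructor
      · intro h j hj
        exact h j hj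
      · intro h j hj
        exact h hj
  set Jf : ℝ → Finset (Fin N) := fun lam => Finset.univ.filter fun j => lam ≤ α j with hJf
  have hcoe : ∀ lam : ℝ, (↑(Jf lam) : Set (Fin N)) = {j : Fin N | lam ≤ α j} := by
    intro lam; ext j; simp [hJf]
  -- the superlevel set as a span
  have hsetEq : ∀ lam : ℝ,
      ((Submodule.span ℂ (b '' ↑(Jf lam)) : Submodule ℂ V) : Set V)
        = {v : V | (lam : EReal) ≤ χ v} := by
    intro lam
    ext v
    rw [SetLike.mem_coe, ← b.coe_toBasis, Module.Basis.mem_span_image, hcoe]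
    rw [Set.mem_setOf_eq]
    exact (hchar lam v).symm
  -- finrank of the span
  have hfr : ∀ lam : ℝ,
      Module.finrank ℂ (Submodule.span ℂ (b '' ↑(Jf lam))) = (Jf lam).card := by
    intro lam
    have hinj : Function.Injective b := by
      have := b.toBasis.injective
      rwa [b.coe_toBasis] at this
    have hli0 : LinearIndependent ℂ (fun x : (↑(Jf lam) : Set (Fin N)) => b x) :=
      b.orthonormal.linearIndependent.comp _ Subtype.coe_injective
    have hli : LinearIndependent ℂ
        ((↑) : (b '' (↑(Jf lam) : Set (Fin N))) → V) := LinearIndepOn.id_image hli0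
    rw [finrank_span_set_eq_card hli, Set.toFinset_image, Finset.toFinset_coe,
      Finset.card_image_of_injective _ hinj]
  intro i
  constructor
  · refine ⟨Submodule.span ℂ (b '' ↑(Jf (α i))), hsetEq (α i), ?_⟩
    rw [hfr]
    have hsub : Finset.Iic i ⊆ Jf (α i) := by
      intro j hj
      simp only [hJf, Finset.mem_filter, Finset.mem_univ, true_and]
      exact hα (Finset.mem_Iic.1 hj)
    calc (i : ℕ) + 1 = (Finset.Iic i).card := (Fin.card_Iic i).symm
      _ ≤ (Jf (α i)).card := Finset.card_le_card hsub
  · rintro lam ⟨W', hW', hc⟩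
    by_contra hlt
    push_neg at hlt
    have hW'eq : W' = Submodule.span ℂ (b '' ↑(Jf lam)) :=
      SetLike.coe_injective (hW'.trans (hsetEq lam).symm)
    rw [hW'eq, hfr] at hc
    have hsub : Jf lam ⊆ Finset.Iio i := by
      intro j hj
      simp only [hJf, Finset.mem_filter, Finset.mem_univ, true_and] at hj
      rw [Finset.mem_Iio]
      by_contra hji
      push_neg at hji
      exact absurd hj (not_le.2 (lt_of_le_of_lt (hα hji) hlt))
    have := Finset.card_le_card hsub
    rw [Fin.card_Iio] at this
    omega
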